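/- Let T be a finite abelian group and b₀ : T × T → ℚ/ℤ a symmetric bilinear form (possibly degenerate). Let T̂ = Hom(T, ℚ/ℤ). Then the form b on T × T̂ defined by b((s₁,σ₁),(s₂,σ₂)) = b₀(s₁,s₂) + σ₁(s₂) + σ₂(s₁) is a nonsingular symmetric bilinear form: the induced map T × T̂ → Hom(T × T̂, ℚ/ℤ) is an isomorphism. -/

import Mathlib

lemma qz_torsion {n : ℕ} (hn : 0 < n) {x : AddCircle (1 : ℚ)} (hx : n • x = 0) :
    ∃ k : ℕ, x = k • ((((n : ℚ))⁻¹ : ℚ) : AddCircle (1 : ℚ)) := by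
  haveI : Fact ((0:ℚ) < 1) := ⟨one_pos⟩
  have hd : addOrderOf x ∣ n := addOrderOf_dvd_of_nsmul_eq_zero hx
  have hdpos : 0 < addOrderOf x := by
    rcases Nat.eq_zero_or_pos (addOrderOf x) with h | h
    · rw [h] at hd; omega
    · exact h
  have hfin : IsOfFinAddOrder x := addOrderOf_pos_iff.mp hdpos
  obtain ⟨m, hg, hlt, he⟩ := AddCircle.exists_gcd_eq_one_of_isOfFinAddOrder hfin
  obtain ⟨c, hc⟩ := hd
  refine ⟨m * c, ?_⟩
  have hcpos : 0 < c := by nlinarith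
  rw [← he, ← AddCircle.coe_nsmul]
  congr 1
  have h1 : ((addOrderOf x : ℚ)) ≠ 0 := by positivity
  have h2 : ((c : ℚ)) ≠ 0 := by positivity
  rw [nsmul_eq_mul]
  push_cast [hc]
  field_simp

lemma qz_hasEnough (n : ℕ) (hn : 0 < n) :
    HasEnoughRootsOfUnity (Multiplicative (AddCircle (1 : ℚ))) n := by
  haveI : Fact ((0:ℚ) < 1) := ⟨one_pos⟩
  set ζa : AddCircle (1 : ℚ) := ((((n : ℚ))⁻¹ : ℚ) : AddCircle (1 : ℚ)) with hζa
  have hord : addOrderOf ζa = n := by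
    have := AddCircle.addOrderOf_period_div (p := (1 : ℚ)) (n := n) hn
    rwa [one_div] at this
  set ζ : Multiplicative (AddCircle (1 : ℚ)) := Multiplicative.ofAdd ζa with hζ
  have hoζ : orderOf ζ = n := by rw [hζ, orderOf_ofAdd_eq_addOrderOf, hord]
  set ζu : (Multiplicative (AddCircle (1 : ℚ)))ˣ := toUnits ζ with hζu
  have hζumem : ζu ∈ rootsOfUnity n (Multiplicative (AddCircle (1 : ℚ))) := by
    rw [mem_rootsOfUnity, hζu, ← map_pow, ← hoζ, pow_orderOf_eq_one, map_one]
  constructor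
  · exact ⟨ζ, hoζ ▸ IsPrimitiveRoot.orderOf ζ⟩
  · refine ⟨⟨⟨ζu, hζumem⟩, fun x => ?_⟩⟩
    have h1 : ((x : (Multiplicative (AddCircle (1:ℚ)))ˣ) : Multiplicative (AddCircle (1:ℚ))) ^ n = 1 := by
      have h2 := x.2
      rw [mem_rootsOfUnity] at h2
      simpa using congrArg Units.val h2
    have hx : n • (Multiplicative.toAdd ((x : (Multiplicative (AddCircle (1:ℚ)))ˣ) : Multiplicative (AddCircle (1:ℚ)))) = 0 := by
      simpa using congrArg Multiplicative.toAdd h1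
    obtain ⟨k, hk⟩ := qz_torsion hn hx
    refine ⟨(k : ℤ), ?_⟩
    have hv : ζ ^ (k : ℤ) = ((x : (Multiplicative (AddCircle (1:ℚ)))ˣ) : Multiplicative (AddCircle (1:ℚ))) := by
      rw [zpow_natCast]
      apply Multiplicative.toAdd.injective
      simp [hζ, ← hk]
      rw [hk, hζa]
    refine Subtype.ext (Units.ext ?_)
    simpa [hζu] using hv

lemma hom_equiv_self (T : Type*) [AddCommGroup T] [Finite T] :
    Nonempty ((T →+ AddCircle (1 : ℚ)) ≃ T) := by
  haveI : HasEnoughRootsOfUnity (Multiplicative (AddCircle (1:ℚ)))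
      (Monoid.exponent (Multiplicative T)) :=
    qz_hasEnough _ (Nat.pos_of_ne_zero Monoid.exponent_ne_zero_of_finite)
  obtain ⟨e⟩ := CommGroup.monoidHom_mulEquiv_of_hasEnoughRootsOfUnity
    (Multiplicative T) (Multiplicative (AddCircle (1:ℚ)))
  exact ⟨(AddMonoidHom.toMultiplicative.trans
    ((MulEquiv.monoidHomCongrRight (M := Multiplicative T) toUnits).toEquiv.trans
      (e.toEquiv.trans Multiplicative.toAdd))) ⟩

lemma char_sep {T : Type*} [AddCommGroup T] {s : T}
    (h : ∀ τ : T →+ AddCircle (1 : ℚ), τ s = 0) : s = 0 :=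
  CharacterModule.eq_zero_of_character_apply (fun c => h c)

lemma eval_surj (T : Type*) [AddCommGroup T] [Finite T]
    (φ : (T →+ AddCircle (1 : ℚ)) →+ AddCircle (1 : ℚ)) :
    ∃ s : T, ∀ τ : T →+ AddCircle (1 : ℚ), τ s = φ τ := by
  haveI : Finite (T →+ AddCircle (1 : ℚ)) :=
    (hom_equiv_self T).elim fun e => Finite.of_equiv _ e.symm
  haveI : Finite ((T →+ AddCircle (1 : ℚ)) →+ AddCircle (1 : ℚ)) :=
    (hom_equiv_self (T →+ AddCircle (1 : ℚ))).elim fun e => Finite.of_equiv _ e.symm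
  let E : T →+ ((T →+ AddCircle (1 : ℚ)) →+ AddCircle (1 : ℚ)) :=
    { toFun := fun s =>
        { toFun := fun τ => τ s
          map_zero' := rfl
          map_add' := fun τ τ' => rfl }
      map_zero' := by ext τ; simp
      map_add' := fun s s' => by ext τ; simp }
  have hinj : Function.Injective E := by
    intro s s' hss
    have : s - s' = 0 := by
      apply char_sep
      intro τ
      have : τ s = τ s' := congrArg (fun ψ => ψ τ) hss
      simp [map_sub, this]
    exact sub_eq_zero.mp this
  obtain ⟨e1⟩ := hom_equiv_self T
  obtain ⟨e2⟩ := hom_equiv_self (T →+ AddCircle (1 : ℚ))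
  have hcard : Nat.card T = Nat.card ((T →+ AddCircle (1 : ℚ)) →+ AddCircle (1 : ℚ)) :=
    Nat.card_congr (e2.trans e1).symm
  have hbij : Function.Bijective E :=
    (Nat.bijective_iff_injective_and_card E).mpr ⟨hinj, hcard⟩
  obtain ⟨s, hs⟩ := hbij.2 φ
  exact ⟨s, fun τ => congrArg (fun ψ => ψ τ) hs⟩


/-- for a finite abelian group `T` with a symmetric bilinear form
`b₀ : T × T → ℚ/ℤ` and `T̂ = Hom(T, ℚ/ℤ)`, the form
`b((s₁,σ₁),(s₂,σ₂)) = b₀(s₁,s₂) + σ₁(s₂) + σ₂(s₁)` on `T × T̂` is a nonsingular symmetric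
bilinear form: `x ↦ b(x,·)` is an isomorphism onto `Hom(T × T̂, ℚ/ℤ)`. -/
theorem stmt_17 (T : Type*) [AddCommGroup T] [Finite T]
    (b₀ : T → T → AddCircle (1 : ℚ))
    (hadd : ∀ s s' t, b₀ (s + s') t = b₀ s t + b₀ s' t)
    (hsym : ∀ s t, b₀ s t = b₀ t s) :
    let b : (T × (T →+ AddCircle (1 : ℚ))) → (T × (T →+ AddCircle (1 : ℚ))) →
        AddCircle (1 : ℚ) := fun p q => b₀ p.1 q.1 + p.2 q.1 + q.2 p.1
    (∀ x y, b x y = b y x) ∧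
    (∀ x x' y, b (x + x') y = b x y + b x' y) ∧
    (∀ h : T × (T →+ AddCircle (1 : ℚ)) →+ AddCircle (1 : ℚ),
      ∃! x, ∀ y, b x y = h y) := by
  intro b
  have hb0 : ∀ t, b₀ 0 t = 0 := by
    intro t
    have h0 := hadd 0 0 t
    rw [add_zero] at h0
    exact (left_eq_add.mp h0)
  have hb0' : ∀ t, b₀ t 0 = 0 := fun t => by rw [hsym]; exact hb0 t
  have hradd : ∀ s t t', b₀ s (t + t') = b₀ s t + b₀ s t' := by
    intro s t t'
    rw [hsym s (t + t'), hadd, hsym t s, hsym t' s]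
  refine ⟨?_, ?_, ?_⟩
  · intro x y
    show b₀ x.1 y.1 + x.2 y.1 + y.2 x.1 = b₀ y.1 x.1 + y.2 x.1 + x.2 y.1
    rw [hsym]; abel
  · intro x x' y
    show b₀ (x.1 + x'.1) y.1 + (x.2 + x'.2) y.1 + y.2 (x.1 + x'.1) = _
    rw [hadd, AddMonoidHom.add_apply, map_add]
    show _ = b₀ x.1 y.1 + x.2 y.1 + y.2 x.1 + (b₀ x'.1 y.1 + x'.2 y.1 + y.2 x'.1)
    abel
  · intro h
    obtain ⟨s, hs⟩ := eval_surj T (h.comp (AddMonoidHom.inr T (T →+ AddCircle (1 : ℚ))))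
    have hs : ∀ τ : T →+ AddCircle (1 : ℚ), τ s = h (0, τ) := fun τ => hs τ
    let σ : T →+ AddCircle (1 : ℚ) := AddMonoidHom.mk' (fun t => h (t, 0) - b₀ s t) (by
      intro t t'
      show h (t + t', 0) - b₀ s (t + t') = (h (t, 0) - b₀ s t) + (h (t', 0) - b₀ s t')
      have h1 : h (t + t', 0) = h (t, 0) + h (t', 0) := by
        have he : ((t + t', 0) : T × (T →+ AddCircle (1 : ℚ))) = (t, 0) + (t', 0) := by simp
        rw [he, map_add]
      rw [h1, hradd]; abel)
    have hσ : ∀ t, σ t = h (t, 0) - b₀ s t := fun t => rfl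
    refine ⟨(s, σ), ?_, ?_⟩
    · intro y
      show b₀ s y.1 + σ y.1 + y.2 s = h y
      have hy : h y = h (y.1, 0) + h (0, y.2) := by rw [← map_add]; congr 1; simp
      rw [hσ, hy, ← hs y.2]
      abel
    · intro x' hx'
      obtain ⟨s', σ'⟩ := x'
      have hs' : ∀ τ : T →+ AddCircle (1 : ℚ), τ s' = h (0, τ) := by
        intro τ
        have h2 := hx' (0, τ)
        simpa [b, hb0'] using h2
      have hss : s' = s := sub_eq_zero.mp (char_sep fun τ => by
        rw [map_sub, hs' τ, hs τ, sub_self])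
      have hσσ : σ' = σ := by
        ext t
        have h3 := hx' (t, 0)
        rw [hss] at h3
        simp only [b, AddMonoidHom.zero_apply, add_zero] at h3
        rw [hσ, ← h3]
        abel
      rw [hss, hσσ]
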